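/- Fix N and ρ = e^{2πi/N}. Suppose a_k = c_k/N³ + e_k and b_k = c_k/N³ + e′_k with |c_k| ≤ C, |e_k|, |e′_k| ≤ C/N⁴ for a constant C independent of N, k. Define q_0 = 0, q_1 = 1, q_{k+1} = (1+ρ+a_k)q_k − (ρ+b_k)q_{k−1}. Then there is a constant C′ independent of N with |q_N| ≤ C′/N and |q_{N+1} − 1| ≤ C′/N. -/

import Mathlib

theorem stmt_12 (C : ℝ) (hC : 0 < C) :
    ∃ C' : ℝ, 0 < C' ∧ ∃ N₀ : ℕ, ∀ N : ℕ, N₀ ≤ N →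
      ∀ ρ : ℂ, ρ = Complex.exp (2 * Real.pi * Complex.I / N) →
      ∀ a b c : ℕ → ℂ,
        (∀ k, ‖c k‖ ≤ C) →
        (∀ k, ‖a k - c k / (N : ℂ) ^ 3‖ ≤ C / (N : ℝ) ^ 4) →
        (∀ k, ‖b k - c k / (N : ℂ) ^ 3‖ ≤ C / (N : ℝ) ^ 4) →
      ∀ q : ℕ → ℂ, q 0 = 0 → q 1 = 1 →
        (∀ k, q (k + 2) = (1 + ρ + a (k + 1)) * q (k + 1) - (ρ + b (k + 1)) * q k) →
        ‖q N‖ ≤ C' / N ∧ ‖q (N + 1) - 1‖ ≤ C' / N := by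
  refine ⟨12 * C, by positivity, ⌈32 * C⌉₊ + 2, ?_⟩
  intro N hN ρ hρ a b c hc ha hb q hq0 hq1 hq
  have hC0 : (0:ℝ) ≤ C := hC.le
  have hN2 : 2 ≤ N := le_trans (by omega) hN
  have hn0 : (0:ℝ) < N := by exact_mod_cast Nat.pos_of_ne_zero (by omega)
  have hn2 : (2:ℝ) ≤ N := by exact_mod_cast hN2
  have hNC : 32 * C ≤ (N:ℝ) := by
    have h1 : ((⌈32*C⌉₊ : ℕ) : ℝ) ≤ N := by exact_mod_cast le_trans (Nat.le_add_right _ 2) hN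
    exact (Nat.le_ceil _).trans h1
  have hNe : (N:ℂ) ≠ 0 := Nat.cast_ne_zero.mpr (by omega)
  have hNr : (N:ℝ) ≠ 0 := ne_of_gt hn0
  -- facts about ρ
  have hρN : ρ ^ N = 1 := by
    rw [hρ, ← Complex.exp_nat_mul,
      show (N:ℂ) * (2*(Real.pi:ℂ)*Complex.I/N) = 2*(Real.pi:ℂ)*Complex.I by
        field_simp]
    exact Complex.exp_two_pi_mul_I
  have hρ1 : ρ ≠ 1 := by
    rw [hρ]
    intro h
    obtain ⟨n, hn'⟩ := Complex.exp_eq_one_iff.mp h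
    have hπI : (2*(Real.pi:ℂ)*Complex.I) ≠ 0 :=
      mul_ne_zero (mul_ne_zero two_ne_zero (Complex.ofReal_ne_zero.mpr Real.pi_ne_zero))
        Complex.I_ne_zero
    have h2 : (1:ℂ) * (2*(Real.pi:ℂ)*Complex.I) = ((n:ℂ)*(N:ℂ)) * (2*(Real.pi:ℂ)*Complex.I) := by
      have h0 := hn'
      field_simp at h0
      linear_combination (2*(Real.pi:ℂ)*Complex.I) * h0
    have h3 : (1:ℂ) = (n:ℂ)*(N:ℂ) := mul_right_cancel₀ hπI h2
    have h4 : (1:ℤ) = n * N := by exact_mod_cast h3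
    have h5 : (N:ℤ) ≤ 1 := Int.le_of_dvd one_pos ⟨n, by linarith⟩
    omega
  have hρnorm : ‖ρ‖ = 1 := by
    rw [hρ, show (2 * (Real.pi:ℂ) * Complex.I / N) = ((2*Real.pi/(N:ℝ) : ℝ):ℂ) * Complex.I by
      push_cast; ring]
    exact Complex.norm_exp_ofReal_mul_I _
  -- constants
  set β : ℝ := C / (N:ℝ)^3 with hβdef
  have hβ0 : (0:ℝ) ≤ β := by positivity
  set δ : ℝ := 8*β*((N:ℝ)+1) with hδdef
  have hδ0 : (0:ℝ) ≤ δ := by positivity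
  have hNδ : (N:ℝ) * δ ≤ 1 := by
    rw [hδdef, hβdef,
      show (N:ℝ) * (8*(C/(N:ℝ)^3)*((N:ℝ)+1)) = 8*C*((N:ℝ)+1)/(N:ℝ)^2 by field_simp,
      div_le_one (by positivity)]
    nlinarith [mul_le_mul_of_nonneg_right hNC (by positivity : (0:ℝ) ≤ (N:ℝ)+1), hn2,
      sq_nonneg ((N:ℝ))]
  have hcN : ∀ k, ‖c k / (N:ℂ)^3‖ ≤ β := by
    intro k
    rw [norm_div, norm_pow, Complex.norm_natCast, hβdef]
    gcongr
    exact hc k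
  have hE : C/(N:ℝ)^4 ≤ β := by
    rw [hβdef, div_le_div_iff₀ (by positivity) (by positivity)]
    nlinarith [mul_nonneg (mul_nonneg hC0 (pow_pos hn0 3).le)
      (by linarith : (0:ℝ) ≤ (N:ℝ) - 1)]
  have ha2 : ∀ k, ‖a k‖ ≤ 2*β := by
    intro k
    have h1 : ‖a k‖ ≤ ‖a k - c k/(N:ℂ)^3‖ + ‖c k/(N:ℂ)^3‖ := by
      have := norm_add_le (a k - c k/(N:ℂ)^3) (c k/(N:ℂ)^3)
      simpa using this
    linarith [ha k, hcN k]
  have hb2 : ∀ k, ‖b k‖ ≤ 2*β := by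
    intro k
    have h1 : ‖b k‖ ≤ ‖b k - c k/(N:ℂ)^3‖ + ‖c k/(N:ℂ)^3‖ := by
      have := norm_add_le (b k - c k/(N:ℂ)^3) (c k/(N:ℂ)^3)
      simpa using this
    linarith [hb k, hcN k]
  -- joint bound on q and its increments
  have key : ∀ k, k ≤ N → ‖q k‖ ≤ 2*(k:ℝ) ∧ ‖q (k+1) - q k‖ ≤ 1 + (k:ℝ) * δ := by
    intro k
    induction k with
    | zero =>
      intro _
      constructor
      · simp [hq0]
      · simp [hq0, hq1]
    | succ k ih =>
      intro hk
      obtain ⟨hqk, hpk⟩ := ih (by omega)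
      have hkN : (k:ℝ) ≤ N := by exact_mod_cast (by omega : k ≤ N)
      have hkδ : (k:ℝ) * δ ≤ 1 :=
        le_trans (mul_le_mul_of_nonneg_right hkN hδ0) hNδ
      have hq1' : ‖q (k+1)‖ ≤ 2*((k:ℝ)+1) := by
        have h := norm_add_le (q k) (q (k+1) - q k)
        have h2 : q k + (q (k+1) - q k) = q (k+1) := by ring
        rw [h2] at h
        linarith
      constructor
      · push_cast
        exact hq1'
      · have hrec : q (k+2) - q (k+1)
            = ρ * (q (k+1) - q k) + (a (k+1) * q (k+1) - b (k+1) * q k) := by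
          rw [hq k]; ring
        have h1 : ‖q (k+2) - q (k+1)‖
            ≤ ‖q (k+1) - q k‖ + ‖a (k+1)‖ * ‖q (k+1)‖ + ‖b (k+1)‖ * ‖q k‖ := by
          rw [hrec]
          refine le_trans (norm_add_le _ _) ?_
          rw [norm_mul, hρnorm, one_mul]
          have h := norm_sub_le (a (k+1) * q (k+1)) (b (k+1) * q k)
          rw [norm_mul, norm_mul] at h
          linarith
        have h2 : ‖a (k+1)‖ * ‖q (k+1)‖ ≤ 2*β * (2*((k:ℝ)+1)) :=
          mul_le_mul (ha2 _) hq1' (norm_nonneg _) (by positivity)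
        have h3 : ‖b (k+1)‖ * ‖q k‖ ≤ 2*β * (2*(k:ℝ)) :=
          mul_le_mul (hb2 _) hqk (norm_nonneg _) (by positivity)
        have hδexp : 2*β*(2*((k:ℝ)+1)) + 2*β*(2*(k:ℝ)) ≤ δ := by
          rw [hδdef]
          nlinarith [mul_le_mul_of_nonneg_left hkN hβ0]
        push_cast
        linarith
  -- bound on the perturbation
  have hf : ∀ k, k + 1 ≤ N → ‖a (k+1) * q (k+1) - b (k+1) * q k‖ ≤ 6*β := by
    intro k hk
    obtain ⟨hqk, hpk⟩ := key k (by omega)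
    obtain ⟨hqk1, -⟩ := key (k+1) hk
    have hqk1' : ‖q (k+1)‖ ≤ 2*((k:ℝ)+1) := by push_cast at hqk1; linarith
    have hkN : (k:ℝ) ≤ N := by exact_mod_cast (by omega : k ≤ N)
    have hk1N : (k:ℝ)+1 ≤ N := by exact_mod_cast hk
    have hkδ : (k:ℝ) * δ ≤ 1 :=
      le_trans (mul_le_mul_of_nonneg_right hkN hδ0) hNδ
    have hdec : a (k+1) * q (k+1) - b (k+1) * q k
        = c (k+1)/(N:ℂ)^3 * (q (k+1) - q k)
          + ((a (k+1) - c (k+1)/(N:ℂ)^3) * q (k+1)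
          - (b (k+1) - c (k+1)/(N:ℂ)^3) * q k) := by ring
    rw [hdec]
    have t1 : ‖c (k+1)/(N:ℂ)^3 * (q (k+1) - q k)‖ ≤ β * 2 := by
      rw [norm_mul]
      exact mul_le_mul (hcN _) (by linarith) (norm_nonneg _) hβ0
    have t2 : ‖(a (k+1) - c (k+1)/(N:ℂ)^3) * q (k+1)‖ ≤ C/(N:ℝ)^4 * (2*((k:ℝ)+1)) := by
      rw [norm_mul]
      exact mul_le_mul (ha _) hqk1' (norm_nonneg _) (by positivity)
    have t3 : ‖(b (k+1) - c (k+1)/(N:ℂ)^3) * q k‖ ≤ C/(N:ℝ)^4 * (2*(k:ℝ)) := by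
      rw [norm_mul]
      exact mul_le_mul (hb _) hqk (norm_nonneg _) (by positivity)
    have hE2 : C/(N:ℝ)^4 * (2*((k:ℝ)+1)) ≤ 2*β := by
      have h1 : C/(N:ℝ)^4 * (2*((k:ℝ)+1)) ≤ C/(N:ℝ)^4 * (2*(N:ℝ)) := by
        apply mul_le_mul_of_nonneg_left (by linarith) (by positivity)
      have h2 : C/(N:ℝ)^4 * (2*(N:ℝ)) = 2*β := by
        rw [hβdef]; field_simp
      linarith
    have hE3 : C/(N:ℝ)^4 * (2*(k:ℝ)) ≤ 2*β := by
      have h1 : C/(N:ℝ)^4 * (2*(k:ℝ)) ≤ C/(N:ℝ)^4 * (2*(N:ℝ)) := by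
        apply mul_le_mul_of_nonneg_left (by linarith) (by positivity)
      have h2 : C/(N:ℝ)^4 * (2*(N:ℝ)) = 2*β := by
        rw [hβdef]; field_simp
      linarith
    refine le_trans (norm_add_le _ _) ?_
    have h := norm_sub_le ((a (k+1) - c (k+1)/(N:ℂ)^3) * q (k+1))
      ((b (k+1) - c (k+1)/(N:ℂ)^3) * q k)
    linarith
  -- bound on u_k = q_{k+1} - q_k - ρ^k
  have hu : ∀ k, k ≤ N → ‖q (k+1) - q k - ρ^k‖ ≤ (k:ℝ) * (6*β) := by
    intro k
    induction k with
    | zero =>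
      intro _
      norm_num [hq0, hq1]
    | succ k ih =>
      intro hk
      have h1 := ih (by omega)
      have h2 := hf k hk
      have hrec : q (k+2) - q (k+1) - ρ^(k+1)
          = ρ * (q (k+1) - q k - ρ^k) + (a (k+1) * q (k+1) - b (k+1) * q k) := by
        rw [hq k]; ring
      calc ‖q (k+1+1) - q (k+1) - ρ^(k+1)‖
          = ‖ρ * (q (k+1) - q k - ρ^k) + (a (k+1) * q (k+1) - b (k+1) * q k)‖ := by
            rw [← hrec]
        _ ≤ ‖ρ * (q (k+1) - q k - ρ^k)‖ + ‖a (k+1) * q (k+1) - b (k+1) * q k‖ :=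
            norm_add_le _ _
        _ ≤ ((k:ℝ)+1) * (6*β) := by
            rw [norm_mul, hρnorm, one_mul]
            linarith
        _ = ((k+1 : ℕ):ℝ) * (6*β) := by push_cast; ring
  -- telescoping
  have hsum : ∀ k, q k - (∑ j ∈ Finset.range k, ρ^j)
      = ∑ j ∈ Finset.range k, (q (j+1) - q j - ρ^j) := by
    intro k
    induction k with
    | zero => simp [hq0]
    | succ k ih =>
      rw [Finset.sum_range_succ, Finset.sum_range_succ, ← ih]
      ring
  have hbound : ∀ k, k ≤ N+1 → ‖q k - ∑ j ∈ Finset.range k, ρ^j‖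
      ≤ (k:ℝ) * ((N:ℝ) * (6*β)) := by
    intro k hk
    rw [hsum k]
    calc ‖∑ j ∈ Finset.range k, (q (j+1) - q j - ρ^j)‖
        ≤ ∑ j ∈ Finset.range k, ‖q (j+1) - q j - ρ^j‖ := norm_sum_le _ _
      _ ≤ ∑ _j ∈ Finset.range k, (N:ℝ)*(6*β) := by
          refine Finset.sum_le_sum ?_
          intro j hj
          have hjN : j ≤ N := by
            have := Finset.mem_range.mp hj
            omega
          refine (hu j hjN).trans ?_
          have hjr : (j:ℝ) ≤ N := by exact_mod_cast hjN
          exact mul_le_mul_of_nonneg_right hjr (by positivity)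
      _ = (k:ℝ) * ((N:ℝ)*(6*β)) := by
          rw [Finset.sum_const, Finset.card_range, nsmul_eq_mul]
  have hgeom : ∑ j ∈ Finset.range N, ρ^j = 0 := by
    rw [geom_sum_eq hρ1, hρN, sub_self, zero_div]
  have hT1 : ∑ j ∈ Finset.range (N+1), ρ^j = 1 := by
    rw [Finset.sum_range_succ, hgeom, hρN, zero_add]
  constructor
  · have h := hbound N (by omega)
    rw [hgeom, sub_zero] at h
    refine h.trans ?_
    rw [hβdef, show (N:ℝ) * ((N:ℝ)*(6*(C/(N:ℝ)^3))) = 6*C/(N:ℝ) by field_simp]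
    gcongr
    linarith
  · have h := hbound (N+1) le_rfl
    rw [hT1] at h
    refine h.trans ?_
    rw [hβdef]
    push_cast
    rw [show ((N:ℝ)+1) * ((N:ℝ)*(6*(C/(N:ℝ)^3))) = 6*C*((N:ℝ)+1)/(N:ℝ)^2 by field_simp,
      div_le_div_iff₀ (by positivity) hn0]
    nlinarith [mul_nonneg (mul_nonneg hC0 hn0.le) (by linarith : (0:ℝ) ≤ (N:ℝ) - 1)]
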